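/- As formal power series in q, Σ_{n≥0} q^{(2n+1)n} / (−q; q)_{2n+1} = Σ_{n≥0} (−1)^n q^{n(n+1)/2} / (−q; q)_n, where binom(2n+1, 2) = n(2n+1). -/

import Mathlib

open PowerSeries Finset

noncomputable def P (m : ℕ) : PowerSeries ℚ :=
  ∏ k ∈ Finset.range m, (1 + (X : PowerSeries ℚ) ^ (k + 1))

lemma Pinv (n : ℕ) : (P (2*n))⁻¹ = (1 + X ^ (2*n+1)) * (P (2*n+1))⁻¹ := by
  have h : P (2*n+1) = P (2*n) * (1 + X ^ (2*n+1)) := by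
    unfold P; rw [Finset.prod_range_succ]
  rw [h, PowerSeries.mul_inv_rev, ← mul_assoc,
    PowerSeries.mul_inv_cancel _ (by simp), one_mul]

lemma pair (n : ℕ) :
    (X : PowerSeries ℚ) ^ (n * (2*n+1)) * (P (2*n+1))⁻¹ =
      (-1 : PowerSeries ℚ)^(2*n) * X ^ ((2*n) * (2*n+1) / 2) * (P (2*n))⁻¹ +
      (-1 : PowerSeries ℚ)^(2*n+1) * X ^ ((2*n+1) * (2*n+1+1) / 2) * (P (2*n+1))⁻¹ := by
  have e1 : (2*n) * (2*n+1) / 2 = n * (2*n+1) := by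
    have : (2*n) * (2*n+1) = 2 * (n * (2*n+1)) := by ring
    omega
  have e2 : (2*n+1) * (2*n+1+1) / 2 = n * (2*n+1) + (2*n+1) := by
    have : (2*n+1) * (2*n+1+1) = 2 * (n * (2*n+1) + (2*n+1)) := by ring
    omega
  have h1 : (-1 : PowerSeries ℚ)^(2*n) = 1 := by
    rw [pow_mul]; simp
  have h2 : (-1 : PowerSeries ℚ)^(2*n+1) = -1 := by
    rw [pow_succ, h1, one_mul]
  rw [e1, e2, h1, h2, Pinv, pow_add]
  ring

lemma coeff_vanish (N e : ℕ) (h : N < e) (f : PowerSeries ℚ) :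
    coeff N ((X : PowerSeries ℚ) ^ e * f) = 0 := by
  rw [PowerSeries.coeff_X_pow_mul']
  simp [Nat.not_le.mpr h]

lemma sum_pairs {M : Type*} [AddCommMonoid M] (f : ℕ → M) (n : ℕ) :
    ∑ i ∈ Finset.range n, (f (2*i) + f (2*i+1)) = ∑ i ∈ Finset.range (2*n), f i := by
  induction n with
  | zero => simp
  | succ n ih =>
    rw [Finset.sum_range_succ, ih,
      show 2 * (n+1) = (2*n + 1) + 1 by ring,
      Finset.sum_range_succ, Finset.sum_range_succ, add_assoc]

/-- `Σ_{n ≥ 0} q^{n(2n+1)} / (−q;q)_{2n+1}` as a formal power series over `ℚ`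
(the term of index `n` has order `n(2n+1) ≥ n`). -/
noncomputable def lhsSeries : PowerSeries ℚ :=
  PowerSeries.mk fun N =>
    coeff N (∑ n ∈ Finset.range (N + 2),
      (X : PowerSeries ℚ) ^ (n * (2 * n + 1)) *
        (∏ k ∈ Finset.range (2 * n + 1), (1 + (X : PowerSeries ℚ) ^ (k + 1)))⁻¹)

/-- `Σ_{n ≥ 0} (−1)^n q^{n(n+1)/2} / (−q;q)_n` as a formal power series over `ℚ`
(the term of index `n` has order `n(n+1)/2 ≥ n`). -/
noncomputable def rhsSeries : PowerSeries ℚ :=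
  PowerSeries.mk fun N =>
    coeff N (∑ n ∈ Finset.range (N + 2),
      ((-1 : PowerSeries ℚ)) ^ n * (X : PowerSeries ℚ) ^ (n * (n + 1) / 2) *
        (∏ k ∈ Finset.range n, (1 + (X : PowerSeries ℚ) ^ (k + 1)))⁻¹)

/-- `Σ_{n≥0} q^{binom(2n+1,2)} / (−q;q)_{2n+1} = Σ_{n≥0} (−1)^n q^{binom(n+1,2)} / (−q;q)_n`. -/
theorem stmt_6 : lhsSeries = rhsSeries := by
  ext N
  simp only [lhsSeries, rhsSeries, coeff_mk]
  set a : ℕ → PowerSeries ℚ := fun m =>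
    ((-1 : PowerSeries ℚ)) ^ m * (X : PowerSeries ℚ) ^ (m * (m + 1) / 2) *
      (∏ k ∈ Finset.range m, (1 + (X : PowerSeries ℚ) ^ (k + 1)))⁻¹ with ha
  have key : ∀ n ∈ Finset.range (N+2),
      (X : PowerSeries ℚ) ^ (n * (2 * n + 1)) *
        (∏ k ∈ Finset.range (2 * n + 1), (1 + (X : PowerSeries ℚ) ^ (k + 1)))⁻¹ =
      a (2*n) + a (2*n+1) := fun n _ => pair n
  rw [Finset.sum_congr rfl key, sum_pairs,
    show 2*(N+2) = (N+2) + (N+2) by ring, Finset.sum_range_add, map_add]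
  have h0 : coeff N (∑ i ∈ Finset.range (N+2), a ((N+2) + i)) = 0 := by
    rw [map_sum]
    apply Finset.sum_eq_zero
    intro i _
    set m := N + 2 + i with hm
    have hlt : N < m * (m + 1) / 2 := by
      have h2 : m * 2 ≤ m * (m+1) := Nat.mul_le_mul_left m (by omega)
      have : m ≤ m * (m+1) / 2 := Nat.le_div_iff_mul_le (by norm_num) |>.mpr h2
      omega
    rw [ha]
    simp only []
    rw [show ((-1 : PowerSeries ℚ)) ^ m * (X : PowerSeries ℚ) ^ (m * (m + 1) / 2) *
        (∏ k ∈ Finset.range m, (1 + (X : PowerSeries ℚ) ^ (k + 1)))⁻¹ =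
      (X : PowerSeries ℚ) ^ (m * (m + 1) / 2) * (((-1 : PowerSeries ℚ)) ^ m *
        (∏ k ∈ Finset.range m, (1 + (X : PowerSeries ℚ) ^ (k + 1)))⁻¹) by ring]
    exact coeff_vanish _ _ hlt _
  rw [h0, add_zero]
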